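/- Let q be a prime power, K = F_{q²}, and let C be a Hermitian LCD [n,k]_{q²} code. Then the number of Hermitian self-orthogonal codewords of C, i.e. the number of c ∈ C with ⟨c,c⟩_H = 0, equals N₀^{q+1}(k), which is q^{k−1}(q^k − q + 1) if k is odd and q^{k−1}(q^k + q − 1) if k is even. -/

import Mathlib

open scoped BigOperators
open Matrix

noncomputable section

/-- The Hermitian inner product `⟨x,y⟩_H = ∑ i, x i * (y i)^q`, where the conjugation
`x ↦ x^q` is given by the ring homomorphism `σ`. -/
def hermInner {K : Type*} [Field K] {n : ℕ} (σ : K →+* K) (x y : Fin n → K) : K :=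
  ∑ i, x i * σ (y i)

/-- The Hermitian dual `C^{⊥H} = {y | ⟨x,y⟩_H = 0 for all x ∈ C}` of a code `C ⊆ K^n`. -/
def hermDual {K : Type*} [Field K] {n : ℕ} (σ : K →+* K) (C : Submodule K (Fin n → K)) :
    Submodule K (Fin n → K) where
  carrier := {y | ∀ x ∈ C, hermInner σ x y = 0}
  zero_mem' := by
    intro x hx
    simp [hermInner]
  add_mem' := by
    intro y z hy hz x hx
    have h1 := hy x hx
    have h2 := hz x hx
    simp only [hermInner, Pi.add_apply, map_add, mul_add, Finset.sum_add_distrib] at h1 h2 ⊢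
    rw [h1, h2, add_zero]
  smul_mem' := by
    intro c y hy x hx
    have h := hy x hx
    simp only [hermInner, Pi.smul_apply, smul_eq_mul, _root_.map_mul] at h ⊢
    calc ∑ i, x i * (σ c * σ (y i)) = σ c * ∑ i, x i * σ (y i) := by
          rw [Finset.mul_sum]; exact Finset.sum_congr rfl fun i _ => by ring
      _ = 0 := by rw [h, mul_zero]

/-- `N₀^{q+1}(m) = q^{m-1}(q^m - q + 1)` for odd `m` and `q^{m-1}(q^m + q - 1)` for even
`m`: the number of solutions of `x₁^{q+1} + ⋯ + x_m^{q+1} = 0` in `F_{q²}^m`. -/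
def N0 (q : ℤ) (m : ℕ) : ℤ :=
  if Odd m then q ^ (m - 1) * (q ^ m - q + 1) else q ^ (m - 1) * (q ^ m + q - 1)


attribute [local instance 10] Classical.propDecidable

open Finset in
lemma card_filter_root_le {K : Type*} [Field K] [Fintype K]
    (p : Polynomial K) (hp : p ≠ 0) :
    (Finset.univ.filter (fun x => p.eval x = 0)).card ≤ p.natDegree := by
  classical
  have h1 : (Finset.univ.filter (fun x => p.eval x = 0)) ⊆ p.roots.toFinset := by
    intro x hx
    simp only [mem_filter] at hx
    simp [Multiset.mem_toFinset, Polynomial.mem_roots, hp, hx.2, Polynomial.IsRoot]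
  calc (Finset.univ.filter (fun x => p.eval x = 0)).card ≤ p.roots.toFinset.card :=
        Finset.card_le_card h1
    _ ≤ Multiset.card p.roots := p.roots.toFinset_card_le
    _ ≤ p.natDegree := p.card_roots'

open Finset in
lemma card_pow_eq_aux {K : Type*} [Field K] [Fintype K]
    (m : ℕ) (hm : 0 < m) (b : K) :
    (Finset.univ.filter (fun x : K => x ^ m = b)).card ≤ m := by
  have h := card_filter_root_le (K := K) (Polynomial.X ^ m - Polynomial.C b) ?_
  · have hd : (Polynomial.X ^ m - Polynomial.C b : Polynomial K).natDegree = m := by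
      rw [Polynomial.natDegree_sub_C, Polynomial.natDegree_X_pow]
    rw [hd] at h
    refine le_trans (le_of_eq ?_) h
    congr 1
    ext x
    simp [sub_eq_zero]
  · intro h0
    have := congrArg Polynomial.natDegree h0
    rw [Polynomial.natDegree_sub_C, Polynomial.natDegree_X_pow,
      Polynomial.natDegree_zero] at this
    omega

open Finset in
lemma norm_fiber_card {K : Type*} [Field K] [Fintype K] (q : ℕ) (hq2 : 2 ≤ q)
    (hK : Fintype.card K = q ^ 2) (b : K) (hb : b ≠ 0) (hbq : b ^ q = b) :
    (Finset.univ.filter (fun x : K => x ^ (q + 1) = b)).card = q + 1 := by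
  classical
  set F : Finset K := Finset.univ.filter (fun c : K => c ≠ 0 ∧ c ^ q = c) with hF
  have hbF : b ∈ F := by simp [hF, hb, hbq]
  have hFle : F.card ≤ q - 1 := by
    have h := card_pow_eq_aux (K := K) (q - 1) (by omega) 1
    refine le_trans (Finset.card_le_card ?_) h
    intro c hc
    simp only [hF, mem_filter, mem_univ, true_and] at hc ⊢
    obtain ⟨hc0, hcq⟩ := hc
    have h1 : c ^ (q - 1) * c = 1 * c := by
      rw [← pow_succ]
      have : q - 1 + 1 = q := by omega
      rw [this, hcq, one_mul]
    exact mul_right_cancel₀ hc0 h1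
  have hmem : ∀ x ∈ Finset.univ.filter (fun x : K => x ≠ 0), x ^ (q + 1) ∈ F := by
    intro x hx
    simp only [mem_filter, mem_univ, true_and] at hx
    simp only [hF, mem_filter, mem_univ, true_and]
    constructor
    · exact pow_ne_zero _ hx
    · have hxcard : x ^ (q ^ 2) = x := by
        have := FiniteField.pow_card x
        rwa [hK] at this
      calc (x ^ (q+1)) ^ q = x ^ (q^2) * x ^ q := by ring
        _ = x * x ^ q := by rw [hxcard]
        _ = x ^ (q+1) := by ring
  have hsum : (Finset.univ.filter (fun x : K => x ≠ 0)).card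
      = ∑ c ∈ F, ((Finset.univ.filter (fun x : K => x ≠ 0)).filter
          (fun x => x ^ (q+1) = c)).card :=
    Finset.card_eq_sum_card_fiberwise hmem
  have hcardne : (Finset.univ.filter (fun x : K => x ≠ 0)).card = q ^ 2 - 1 := by
    rw [Finset.filter_ne', Finset.card_erase_of_mem (mem_univ 0), Finset.card_univ, hK]
  have hfib_eq : ∀ c ∈ F, ((Finset.univ.filter (fun x : K => x ≠ 0)).filter
      (fun x => x ^ (q+1) = c)).card
      = (Finset.univ.filter (fun x : K => x ^ (q+1) = c)).card := by
    intro c hc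
    simp only [hF, mem_filter, mem_univ, true_and] at hc
    congr 1
    ext x
    simp only [mem_filter, mem_univ, true_and]
    constructor
    · rintro ⟨-, h⟩; exact h
    · intro h
      refine ⟨?_, h⟩
      rintro rfl
      rw [zero_pow (by omega)] at h
      exact hc.1 h.symm
  have hfib_le : ∀ c : K, (Finset.univ.filter (fun x : K => x ^ (q+1) = c)).card ≤ q + 1 :=
    fun c => card_pow_eq_aux (q+1) (by omega) c
  have hsplit : q ^ 2 - 1 = (Finset.univ.filter (fun x : K => x ^ (q+1) = b)).card
      + ∑ c ∈ F.erase b, (Finset.univ.filter (fun x : K => x ^ (q+1) = c)).card := by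
    rw [← hcardne, hsum, Finset.sum_congr rfl hfib_eq,
      ← Finset.add_sum_erase _ _ hbF]
  have hrest : ∑ c ∈ F.erase b, (Finset.univ.filter (fun x : K => x ^ (q+1) = c)).card
      ≤ (q - 2) * (q + 1) := by
    calc ∑ c ∈ F.erase b, (Finset.univ.filter (fun x : K => x ^ (q+1) = c)).card
        ≤ ∑ c ∈ F.erase b, (q + 1) := Finset.sum_le_sum (fun c _ => hfib_le c)
      _ = (F.erase b).card * (q + 1) := by rw [Finset.sum_const, smul_eq_mul]
      _ ≤ (q - 2) * (q + 1) := by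
          apply Nat.mul_le_mul_right
          rw [Finset.card_erase_of_mem hbF]
          omega
  have hfb := hfib_le b
  have hq2' : (q - 2) * (q + 1) + (q + 1) + (q + 1) = q ^ 2 + q := by
    obtain ⟨r, hr⟩ : ∃ r, q = r + 2 := ⟨q - 2, by omega⟩
    subst hr
    simp only [Nat.add_sub_cancel]
    ring
  omega

section Herm
open Finset
variable {K : Type*} [Field K] [Fintype K] {n : ℕ} (σ : K →+* K)

lemma hermInner_add_left (x y z : Fin n → K) :
    hermInner σ (x + y) z = hermInner σ x z + hermInner σ y z := by
  simp [hermInner, add_mul, Finset.sum_add_distrib]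

lemma hermInner_add_right (x y z : Fin n → K) :
    hermInner σ x (y + z) = hermInner σ x y + hermInner σ x z := by
  simp [hermInner, mul_add, Finset.sum_add_distrib]

lemma hermInner_smul_left (a : K) (x y : Fin n → K) :
    hermInner σ (a • x) y = a * hermInner σ x y := by
  simp [hermInner, Finset.mul_sum, mul_assoc]

lemma hermInner_smul_right (a : K) (x y : Fin n → K) :
    hermInner σ x (a • y) = σ a * hermInner σ x y := by
  simp only [hermInner, Pi.smul_apply, smul_eq_mul, _root_.map_mul, Finset.mul_sum]
  exact Finset.sum_congr rfl fun i _ => by ring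

lemma hermInner_sub_left (x y z : Fin n → K) :
    hermInner σ (x - y) z = hermInner σ x z - hermInner σ y z := by
  simp [hermInner, sub_mul, Finset.sum_sub_distrib]

/-- the linear functional `c ↦ ⟨c, v⟩` -/
def hermFunc (v : Fin n → K) : (Fin n → K) →ₗ[K] K where
  toFun c := hermInner σ c v
  map_add' x y := hermInner_add_left σ x y v
  map_smul' a x := hermInner_smul_left σ a x v

variable (q : ℕ) (hq2 : 2 ≤ q) (hK : Fintype.card K = q ^ 2) (hσ : ∀ x : K, σ x = x ^ q)

include hK hσ in
lemma sigma_sigma (x : K) : σ (σ x) = x := by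
  rw [hσ, hσ, ← pow_mul, ← pow_two, ← hK, FiniteField.pow_card]

include hK hσ in
lemma hermInner_conj_comm (x y : Fin n → K) :
    hermInner σ y x = σ (hermInner σ x y) := by
  simp only [hermInner, _root_.map_sum, _root_.map_mul]
  refine Finset.sum_congr rfl fun i _ => ?_
  rw [sigma_sigma σ q hK hσ]
  ring

include hq2 hK hσ in
lemma exists_sigma_ne : ∃ μ : K, σ μ ≠ μ := by
  classical
  by_contra h
  push_neg at h
  have hall : ∀ x : K, x ^ q - x = 0 := by
    intro x
    have := h x
    rw [hσ] at this
    rw [this, sub_self]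
  have hne : (Polynomial.X ^ q - Polynomial.X : Polynomial K) ≠ 0 := by
    intro h0
    have h1 : (Polynomial.X ^ q - Polynomial.X : Polynomial K).natDegree = q := by
      rw [Polynomial.natDegree_sub_eq_left_of_natDegree_lt
        (by simp [Polynomial.natDegree_X_pow]; omega), Polynomial.natDegree_X_pow]
    rw [h0, Polynomial.natDegree_zero] at h1
    omega
  have hd : (Polynomial.X ^ q - Polynomial.X : Polynomial K).natDegree = q := by
    rw [Polynomial.natDegree_sub_eq_left_of_natDegree_lt
      (by simp [Polynomial.natDegree_X_pow]; omega), Polynomial.natDegree_X_pow]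
  have hle := card_filter_root_le (Polynomial.X ^ q - Polynomial.X : Polynomial K) hne
  rw [hd] at hle
  have : (Finset.univ.filter
      (fun x : K => (Polynomial.X ^ q - Polynomial.X : Polynomial K).eval x = 0)) =
      Finset.univ := by
    ext x; simp [hall x]
  rw [this, Finset.card_univ, hK] at hle
  nlinarith

include hq2 hK hσ in
lemma norm_fiber_card' (b : K) (hb : b ≠ 0) (hbq : σ b = b) :
    (Finset.univ.filter (fun x : K => x ^ (q + 1) = b)).card = q + 1 := by
  have hbq' : b ^ q = b := by rw [← hσ b]; exact hbq
  have h := norm_fiber_card q hq2 hK b hb hbq'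
  convert h using 2

include hq2 hK hσ in
lemma exists_anisotropic (C : Submodule K (Fin n → K)) (hC : Module.finrank K C ≠ 0)
    (hnd : ∀ y ∈ C, (∀ x ∈ C, hermInner σ x y = 0) → y = 0) :
    ∃ v ∈ C, hermInner σ v v ≠ 0 := by
  by_contra hno
  push_neg at hno
  have hall : ∀ x ∈ C, ∀ y ∈ C, hermInner σ x y = 0 := by
    intro x hx y hy
    set c := hermInner σ x y with hc
    have h1 : ∀ l : K, σ l * c + l * σ c = 0 := by
      intro l
      have hmem : x + l • y ∈ C := C.add_mem hx (C.smul_mem l hy)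
      have h0 := hno _ hmem
      simp only [hermInner_add_left, hermInner_add_right, hermInner_smul_left,
        hermInner_smul_right] at h0
      rw [hno x hx, hno y hy, hermInner_conj_comm σ q hK hσ x y, ← hc] at h0
      linear_combination h0
    obtain ⟨μ, hμ⟩ := exists_sigma_ne σ q hq2 hK hσ
    have e1 := h1 1
    rw [_root_.map_one, one_mul, one_mul] at e1
    have e2 := h1 μ
    have hσc : σ c = -c := by linear_combination e1
    rw [hσc] at e2
    have : (σ μ - μ) * c = 0 := by linear_combination e2
    rcases mul_eq_zero.1 this with h | h
    · exact absurd (sub_eq_zero.1 h) hμ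
    · exact h
  have : C = ⊥ := by
    rw [eq_bot_iff]
    intro y hy
    rw [Submodule.mem_bot]
    exact hnd y hy (fun x hx => hall x hx y hy)
  rw [this] at hC
  simp at hC
end Herm

def Acount (q : ℤ) : ℕ → ℤ
  | 0 => 1
  | (m+1) => (q+1) * q ^ (2*m) - q * Acount q m

lemma Acount_eq_N0 (q : ℤ) (k : ℕ) (hk : 0 < k) : Acount q k = N0 q k := by
  obtain ⟨j, rfl⟩ : ∃ j, k = j + 1 := ⟨k - 1, by omega⟩
  clear hk
  induction j with
  | zero =>
    simp [Acount, N0]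
  | succ i ihi =>
    rw [show i + 1 + 1 = (i + 1) + 1 from rfl, Acount, ihi]
    rcases Nat.even_or_odd (i + 1) with he | ho
    · have h1 : ¬ Odd (i + 1) := Nat.not_odd_iff_even.2 he
      have h2 : Odd (i + 1 + 1) := by
        rcases he with ⟨t, ht⟩
        exact ⟨t, by omega⟩
      rw [N0, N0, if_neg h1, if_pos h2]
      simp only [Nat.add_sub_cancel]
      ring
    · have h1 : Odd (i + 1) := ho
      have h2 : ¬ Odd (i + 1 + 1) := by
        rcases ho with ⟨t, ht⟩
        rw [Nat.odd_iff]
        omega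
      rw [N0, N0, if_pos h1, if_neg h2]
      simp only [Nat.add_sub_cancel]
      ring

section Main
open Finset
variable {K : Type*} [Field K] [Fintype K] {n : ℕ} (σ : K →+* K)
  (q : ℕ) (hq2 : 2 ≤ q) (hK : Fintype.card K = q ^ 2) (hσ : ∀ x : K, σ x = x ^ q)

include hq2 hK hσ in
lemma count_iso : ∀ (k : ℕ) (C : Submodule K (Fin n → K)),
    Module.finrank K C = k →
    (∀ y ∈ C, (∀ x ∈ C, hermInner σ x y = 0) → y = 0) →
    ((Finset.univ.filter (fun c : Fin n → K => c ∈ C ∧ hermInner σ c c = 0)).card : ℤ)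
      = Acount q k := by
  intro k
  induction k with
  | zero =>
    intro C hC hnd
    have hCbot : C = ⊥ := by rwa [Submodule.finrank_eq_zero] at hC
    subst hCbot
    have hset : (Finset.univ.filter
        (fun c : Fin n → K => c ∈ (⊥ : Submodule K (Fin n → K)) ∧ hermInner σ c c = 0))
        = {0} := by
      ext c
      simp only [Finset.mem_filter, Finset.mem_univ, true_and, Submodule.mem_bot,
        Finset.mem_singleton]
      constructor
      · rintro ⟨rfl, -⟩; rfl
      · rintro rfl; exact ⟨rfl, by simp [hermInner]⟩
    rw [hset, Finset.card_singleton]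
    rfl
  | succ m ih =>
    intro C hC hnd
    obtain ⟨v, hv, hα⟩ := exists_anisotropic σ q hq2 hK hσ C (by omega) hnd
    set α := hermInner σ v v with hαdef
    have hv0 : v ≠ 0 := by
      rintro rfl
      apply hα
      rw [hαdef]
      simp [hermInner]
    have hσα : σ α = α := (hermInner_conj_comm σ q hK hσ v v).symm
    set W : Submodule K (Fin n → K) := C ⊓ LinearMap.ker (hermFunc σ v) with hWdef
    have hWle : W ≤ C := inf_le_left
    have hmemW : ∀ w, w ∈ W ↔ (w ∈ C ∧ hermInner σ w v = 0) := by
      intro w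
      rw [hWdef, Submodule.mem_inf, LinearMap.mem_ker]
      exact Iff.rfl
    have hdec : ∀ c ∈ C, c - (hermInner σ c v * α⁻¹) • v ∈ W := by
      intro c hc
      rw [hmemW]
      refine ⟨C.sub_mem hc (C.smul_mem _ hv), ?_⟩
      rw [hermInner_sub_left, hermInner_smul_left]
      field_simp
      rw [← hαdef]; ring
    have hconj0 : ∀ w : Fin n → K, hermInner σ w v = 0 → hermInner σ v w = 0 := by
      intro w hw
      rw [hermInner_conj_comm σ q hK hσ w v, hw, _root_.map_zero]
    have hexp : ∀ (l : K) (w : Fin n → K), hermInner σ w v = 0 →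
        hermInner σ (l • v + w) (l • v + w) = l ^ (q+1) * α + hermInner σ w w := by
      intro l w hw
      have hvw := hconj0 w hw
      simp only [hermInner_add_left, hermInner_add_right, hermInner_smul_left,
        hermInner_smul_right]
      rw [hw, hvw, ← hαdef, hσ l]
      have hl : l * l ^ q = l ^ (q+1) := by rw [pow_succ]; ring
      linear_combination (α : K) * hl
    have hspan_inf : (Submodule.span K {v}) ⊓ W = ⊥ := by
      rw [eq_bot_iff]
      intro x hx
      rw [Submodule.mem_inf] at hx
      obtain ⟨hx1, hx2⟩ := hx
      obtain ⟨a, rfl⟩ := Submodule.mem_span_singleton.1 hx1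
      rw [hmemW] at hx2
      have h2 := hx2.2
      rw [hermInner_smul_left] at h2
      rcases mul_eq_zero.1 h2 with h | h
      · rw [h, zero_smul]; exact Submodule.zero_mem _
      · exact absurd h hα
    have hspan_sup : (Submodule.span K {v}) ⊔ W = C := by
      apply le_antisymm
      · apply sup_le
        · rwa [Submodule.span_singleton_le_iff_mem]
        · exact hWle
      · intro c hc
        have h1 : (hermInner σ c v * α⁻¹) • v ∈ Submodule.span K {v} :=
          Submodule.smul_mem _ _ (Submodule.mem_span_singleton_self v)
        have h2 := hdec c hc
        have hce : c = (hermInner σ c v * α⁻¹) • v + (c - (hermInner σ c v * α⁻¹) • v) := by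
          abel
        rw [hce]
        exact Submodule.add_mem_sup h1 h2
    have hrankW : Module.finrank K W = m := by
      have h := Submodule.finrank_sup_add_finrank_inf_eq (Submodule.span K {v}) W
      rw [hspan_sup, hspan_inf, finrank_span_singleton hv0, hC, finrank_bot] at h
      omega
    have hndW : ∀ y ∈ W, (∀ x ∈ W, hermInner σ x y = 0) → y = 0 := by
      intro y hy h
      apply hnd y (hWle hy)
      intro x hx
      have hx' := hdec x hx
      have hvy : hermInner σ v y = 0 := hconj0 y ((hmemW y).1 hy).2
      have hxe : x = (hermInner σ x v * α⁻¹) • v + (x - (hermInner σ x v * α⁻¹) • v) := by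
        abel
      rw [hxe, hermInner_add_left, hermInner_smul_left, h _ hx', hvy, mul_zero, add_zero]
    set S := Finset.univ.filter (fun c : Fin n → K => c ∈ C ∧ hermInner σ c c = 0) with hS
    set FW := Finset.univ.filter (fun w : Fin n → K => w ∈ W) with hFW
    set π : (Fin n → K) → (Fin n → K) := fun c => c - (hermInner σ c v * α⁻¹) • v with hπ
    have hπS : ∀ c ∈ S, π c ∈ FW := by
      intro c hc
      rw [hS, Finset.mem_filter] at hc
      rw [hFW, Finset.mem_filter]
      exact ⟨Finset.mem_univ _, hdec c hc.2.1⟩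
    have hcard1 : S.card = ∑ w ∈ FW, (S.filter (fun c => π c = w)).card :=
      Finset.card_eq_sum_card_fiberwise hπS
    have hfiber : ∀ w ∈ FW, (S.filter (fun c => π c = w)).card
        = (Finset.univ.filter (fun l : K => l ^ (q+1) * α + hermInner σ w w = 0)).card := by
      intro w hw
      have hwW : w ∈ W := (Finset.mem_filter.1 hw).2
      have hwv : hermInner σ w v = 0 := ((hmemW w).1 hwW).2
      apply Finset.card_bij' (i := fun c _ => hermInner σ c v * α⁻¹)
        (j := fun l _ => l • v + w)
      · intro c hc
        rw [Finset.mem_filter] at hc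
        obtain ⟨hcS, hcw⟩ := hc
        rw [hS, Finset.mem_filter] at hcS
        obtain ⟨-, hcC, hcc⟩ := hcS
        rw [Finset.mem_filter]
        refine ⟨Finset.mem_univ _, ?_⟩
        have hce : c = (hermInner σ c v * α⁻¹) • v + w := by
          rw [← hcw]
          simp only [hπ]
          abel
        rw [← hexp _ w hwv, ← hce, hcc]
      · intro l hl
        rw [Finset.mem_filter] at hl
        rw [Finset.mem_filter]
        have hmem : l • v + w ∈ C := C.add_mem (C.smul_mem l hv) (hWle hwW)
        refine ⟨?_, ?_⟩
        · rw [hS, Finset.mem_filter]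
          exact ⟨Finset.mem_univ _, hmem, by rw [hexp _ w hwv]; exact hl.2⟩
        · simp only [hπ]
          rw [hermInner_add_left, hermInner_smul_left, hwv, add_zero, ← hαdef,
            mul_assoc, mul_inv_cancel₀ hα, mul_one]
          abel
      · intro c hc
        rw [Finset.mem_filter] at hc
        rw [← hc.2]
        simp only [hπ]
        abel
      · intro l hl
        rw [hermInner_add_left, hermInner_smul_left, hwv, add_zero, ← hαdef,
          mul_assoc, mul_inv_cancel₀ hα, mul_one]
    have hfibval : ∀ w ∈ FW,
        (Finset.univ.filter (fun l : K => l ^ (q+1) * α + hermInner σ w w = 0)).card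
        = if hermInner σ w w = 0 then 1 else q + 1 := by
      intro w hw
      by_cases hb : hermInner σ w w = 0
      · rw [if_pos hb]
        have hset : (Finset.univ.filter (fun l : K => l ^ (q+1) * α + hermInner σ w w = 0))
            = {0} := by
          ext l
          simp only [Finset.mem_filter, Finset.mem_univ, true_and, Finset.mem_singleton, hb,
            add_zero]
          constructor
          · intro h
            rcases mul_eq_zero.1 h with h' | h'
            · exact pow_eq_zero_iff (by omega) |>.1 h'
            · exact absurd h' hα
          · rintro rfl
            rw [zero_pow (by omega), zero_mul]
        rw [hset, Finset.card_singleton]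
      · rw [if_neg hb]
        set b := -(hermInner σ w w) * α⁻¹ with hbdef
        have hb0 : b ≠ 0 := by
          simp only [hbdef]
          exact mul_ne_zero (neg_ne_zero.2 hb) (inv_ne_zero hα)
        have hσw : σ (hermInner σ w w) = hermInner σ w w :=
          (hermInner_conj_comm σ q hK hσ w w).symm
        have hσb : σ b = b := by
          simp only [hbdef, _root_.map_mul, _root_.map_neg, _root_.map_inv₀, hσw, hσα]
        have hsetEq : (Finset.univ.filter
            (fun l : K => l ^ (q+1) * α + hermInner σ w w = 0))
            = (Finset.univ.filter (fun x : K => x ^ (q+1) = b)) := by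
          ext l
          simp only [Finset.mem_filter, Finset.mem_univ, true_and, hbdef]
          constructor
          · intro h
            field_simp
            linear_combination h
          · intro h
            rw [h]
            field_simp
            ring
        rw [hsetEq, norm_fiber_card' σ q hq2 hK hσ b hb0 hσb]
    have hsum2 : S.card = ∑ w ∈ FW, (if hermInner σ w w = 0 then 1 else q + 1) := by
      rw [hcard1]
      exact Finset.sum_congr rfl (fun w hw => by rw [hfiber w hw, hfibval w hw])
    have hsplit : ∑ w ∈ FW, (if hermInner σ w w = 0 then 1 else q + 1)
        = (FW.filter (fun w => hermInner σ w w = 0)).card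
          + (q + 1) * (FW.filter (fun w => ¬ hermInner σ w w = 0)).card := by
      rw [Finset.sum_ite, Finset.sum_const, Finset.sum_const, smul_eq_mul, smul_eq_mul]
      ring
    have hIsoW : FW.filter (fun w => hermInner σ w w = 0)
        = Finset.univ.filter (fun w : Fin n → K => w ∈ W ∧ hermInner σ w w = 0) := by
      rw [hFW, Finset.filter_filter]
    have hIH : ((FW.filter (fun w => hermInner σ w w = 0)).card : ℤ) = Acount q m := by
      rw [hIsoW]
      exact ih W hrankW hndW
    have hFWcard : FW.card = q ^ (2 * m) := by
      rw [hFW]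
      have h1 : (Finset.univ.filter (fun w : Fin n → K => w ∈ W)).card
          = Fintype.card W := (Fintype.card_subtype _).symm
      rw [h1, Module.card_eq_pow_finrank (K := K) (V := W), hK, hrankW, ← pow_mul]
    have hsplitcard : (FW.filter (fun w => hermInner σ w w = 0)).card
        + (FW.filter (fun w => ¬ hermInner σ w w = 0)).card = FW.card :=
      Finset.card_filter_add_card_filter_not _
    have hfin : (S.card : ℤ)
        = ((FW.filter (fun w => hermInner σ w w = 0)).card : ℤ)
          + (q + 1) * ((FW.filter (fun w => ¬ hermInner σ w w = 0)).card : ℤ) := by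
      rw [hsum2, hsplit]; push_cast; ring
    have hcast : ((FW.filter (fun w => hermInner σ w w = 0)).card : ℤ)
        + ((FW.filter (fun w => ¬ hermInner σ w w = 0)).card : ℤ) = (q : ℤ) ^ (2 * m) := by
      rw [← Nat.cast_add, hsplitcard, hFWcard]; push_cast; ring
    rw [hfin]
    show _ = Acount (q : ℤ) (m + 1)
    rw [Acount]
    rw [← hIH]
    push_cast
    linear_combination ((q : ℤ) + 1) * hcast

end Main

/-- A Hermitian LCD `[n,k]_{q²}` code has exactly `N₀^{q+1}(k)` Hermitian
self-orthogonal codewords. -/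
theorem card_selfOrthogonal_codewords_of_hermitianLCD
    (q : ℕ) (hq : IsPrimePow q)
    {K : Type*} [Field K] [Fintype K] (hK : Fintype.card K = q ^ 2)
    (σ : K →+* K) (hσ : ∀ x : K, σ x = x ^ q)
    (n k : ℕ) (hk : 0 < k)
    (C : Submodule K (Fin n → K)) (hC : Module.finrank K C = k)
    (hLCD : C ⊓ hermDual σ C = ⊥) :
    (Nat.card {c : Fin n → K // c ∈ C ∧ hermInner σ c c = 0} : ℤ) = N0 q k := by
  have hq2 : 2 ≤ q := hq.two_le
  have hnd : ∀ y ∈ C, (∀ x ∈ C, hermInner σ x y = 0) → y = 0 := by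
    intro y hy h
    have hmem : y ∈ C ⊓ hermDual σ C := Submodule.mem_inf.2 ⟨hy, h⟩
    rw [hLCD] at hmem
    exact (Submodule.mem_bot K).1 hmem
  have h1 : Nat.card {c : Fin n → K // c ∈ C ∧ hermInner σ c c = 0}
      = (Finset.univ.filter (fun c : Fin n → K => c ∈ C ∧ hermInner σ c c = 0)).card := by
    rw [Nat.card_eq_fintype_card]
    exact Fintype.card_subtype _
  rw [h1, count_iso σ q hq2 hK hσ k C hC hnd, Acount_eq_N0 (q : ℤ) k hk]
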